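/- If every non-trivial connected component C of a simple graph G is friendly-edge-colorable with χ'(C) = χ'(G), then G is friendly-edge-colorable. -/

import Mathlib

open scoped Classical

/-- `M` is a matching of `G`, given as a finite set of edges. -/
def IsMatchingFinset {V : Type*} (G : SimpleGraph V) (M : Finset (Sym2 V)) : Prop :=
  (M : Set (Sym2 V)) ⊆ G.edgeSet ∧
    ∀ e ∈ M, ∀ f ∈ M, e ≠ f → ∀ v : V, ¬(v ∈ e ∧ v ∈ f)

/-- ν(G): the maximum size of a matching of `G`. -/
noncomputable def matchingNumber {V : Type*} (G : SimpleGraph V) : ℕ :=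
  sSup {n | ∃ M : Finset (Sym2 V), IsMatchingFinset G M ∧ M.card = n}

/-- A proper edge coloring of `G` using colors `< n`. -/
def IsProperEdgeColoring {V : Type*} (G : SimpleGraph V) (n : ℕ) (c : Sym2 V → ℕ) : Prop :=
  (∀ e ∈ G.edgeSet, c e < n) ∧
    ∀ e ∈ G.edgeSet, ∀ f ∈ G.edgeSet, e ≠ f → (∃ v : V, v ∈ e ∧ v ∈ f) → c e ≠ c f

/-- χ'(G): the edge chromatic index of `G`. -/
noncomputable def chromaticIndex {V : Type*} (G : SimpleGraph V) : ℕ :=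
  sInf {n | ∃ c : Sym2 V → ℕ, IsProperEdgeColoring G n c}

/-- `G` is friendly-edge-colorable: its edge set is partitioned into maximum matchings. -/
noncomputable def Friendly {V : Type*} [Fintype V] (G : SimpleGraph V) : Prop :=
  ∃ P : Finset (Finset (Sym2 V)),
    (∀ M ∈ P, IsMatchingFinset G M ∧ M.card = matchingNumber G) ∧
    (∀ e, e ∈ G.edgeFinset ↔ ∃ M ∈ P, e ∈ M) ∧
    ∀ M ∈ P, ∀ N ∈ P, M ≠ N → Disjoint M N

/-- The graph `G` with vertex `x` deleted. -/
def delVert {V : Type*} (G : SimpleGraph V) (x : V) : SimpleGraph {v : V // v ≠ x} :=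
  G.induce {v : V | v ≠ x}

/-- `G` has a perfect matching. -/
def HasPerfectMatchingFinset {V : Type*} (G : SimpleGraph V) : Prop :=
  ∃ M : Finset (Sym2 V), IsMatchingFinset G M ∧ ∀ v : V, ∃ e ∈ M, v ∈ e

/-- `G` is factor-critical. -/
def FactorCritical {V : Type*} (G : SimpleGraph V) : Prop :=
  G.Connected ∧ ∀ x : V, HasPerfectMatchingFinset (delVert G x)

set_option linter.unusedSectionVars false

section basics
variable {V : Type*} [Fintype V] (G : SimpleGraph V)

lemma matchingSet_nonempty : {n | ∃ M : Finset (Sym2 V), IsMatchingFinset G M ∧ M.card = n}.Nonempty :=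
  ⟨0, ∅, ⟨by simp, by simp⟩, rfl⟩

lemma matchingSet_bdd : BddAbove {n | ∃ M : Finset (Sym2 V), IsMatchingFinset G M ∧ M.card = n} := by
  refine ⟨Fintype.card (Sym2 V), ?_⟩
  rintro n ⟨M, _, rfl⟩
  exact Finset.card_le_univ M

lemma exists_max_matching : ∃ M : Finset (Sym2 V), IsMatchingFinset G M ∧ M.card = matchingNumber G :=
  Nat.sSup_mem (matchingSet_nonempty G) (matchingSet_bdd G)

lemma card_le_matchingNumber {M : Finset (Sym2 V)} (hM : IsMatchingFinset G M) :
    M.card ≤ matchingNumber G :=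
  le_csSup (matchingSet_bdd G) ⟨M, hM, rfl⟩

lemma exists_proper_coloring : ∃ c : Sym2 V → ℕ, IsProperEdgeColoring G G.edgeFinset.card c := by
  refine ⟨fun e => if h : e ∈ G.edgeFinset then (G.edgeFinset.equivFin ⟨e, h⟩ : ℕ) else 0, ?_, ?_⟩
  · intro e he
    rw [← SimpleGraph.mem_edgeFinset] at he
    simp only [he, dif_pos]
    exact (G.edgeFinset.equivFin ⟨e, he⟩).2
  · intro e he f hf hne _
    rw [← SimpleGraph.mem_edgeFinset] at he hf
    simp only [he, hf, dif_pos]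
    intro hc
    exact hne (by simpa using congrArg Subtype.val (G.edgeFinset.equivFin.injective (Fin.val_injective hc)))

lemma chromaticIndex_spec : ∃ c : Sym2 V → ℕ, IsProperEdgeColoring G (chromaticIndex G) c :=
  Nat.sInf_mem (s := {n | ∃ c : Sym2 V → ℕ, IsProperEdgeColoring G n c})
    ⟨G.edgeFinset.card, exists_proper_coloring G⟩

lemma chromaticIndex_le {n : ℕ} {c : Sym2 V → ℕ} (hc : IsProperEdgeColoring G n c) :
    chromaticIndex G ≤ n :=
  Nat.sInf_le ⟨c, hc⟩

lemma edgeCard_le_of_coloring {n : ℕ} {c : Sym2 V → ℕ} (hc : IsProperEdgeColoring G n c) :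
    G.edgeFinset.card ≤ n * matchingNumber G := by
  have hcov : G.edgeFinset = (Finset.range n).biUnion (fun i => G.edgeFinset.filter (fun e => c e = i)) := by
    ext e
    simp only [Finset.mem_biUnion, Finset.mem_range, Finset.mem_filter]
    constructor
    · intro he
      exact ⟨c e, hc.1 e (by simpa using he), he, rfl⟩
    · rintro ⟨i, _, he, _⟩; exact he
  calc G.edgeFinset.card ≤ ∑ i ∈ Finset.range n, (G.edgeFinset.filter (fun e => c e = i)).card := by
        conv_lhs => rw [hcov]
        apply Finset.card_biUnion_le
    _ ≤ ∑ _i ∈ Finset.range n, matchingNumber G := by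
        refine Finset.sum_le_sum (fun i _ => ?_)
        refine card_le_matchingNumber G ⟨?_, ?_⟩
        · intro e he
          simp only [Finset.coe_filter, Set.mem_setOf_eq] at he
          exact (SimpleGraph.mem_edgeFinset).1 he.1
        · intro e he f hf hne v hv
          simp only [Finset.mem_filter, SimpleGraph.mem_edgeFinset] at he hf
          exact hc.2 e he.1 f hf.1 hne ⟨v, hv⟩ (he.2.trans hf.2.symm)
    _ = n * matchingNumber G := by simp [Finset.sum_const, mul_comm]

end basics

set_option linter.unusedSectionVars false

section comp
variable {V : Type*} [Fintype V] (G : SimpleGraph V)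

noncomputable abbrev liftE {s : Set V} (M : Finset (Sym2 s)) : Finset (Sym2 V) :=
  M.image (Sym2.map Subtype.val)

lemma liftE_card {s : Set V} (M : Finset (Sym2 s)) : (liftE M).card = M.card :=
  Finset.card_image_of_injective _ (Sym2.map.injective Subtype.val_injective)

lemma lift_edge_mem {c : G.ConnectedComponent} {e : Sym2 c.supp}
    (he : e ∈ (G.induce c.supp).edgeSet) :
    Sym2.map Subtype.val e ∈ G.edgeSet ∧ ∀ v ∈ Sym2.map Subtype.val e, v ∈ c.supp := by
  induction e using Sym2.ind with
  | _ a b =>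
    simp only [SimpleGraph.mem_edgeSet] at he
    have hadj : G.Adj a.val b.val := by simpa [SimpleGraph.induce] using he
    constructor
    · simpa using hadj
    · intro v hv
      rw [Sym2.map_pair_eq, Sym2.mem_iff] at hv
      rcases hv with h | h
      · exact h ▸ a.2
      · exact h ▸ b.2

lemma edge_decompose {e : Sym2 V} (he : e ∈ G.edgeSet) :
    ∃ (c : G.ConnectedComponent) (f : Sym2 c.supp),
      f ∈ (G.induce c.supp).edgeSet ∧ Sym2.map Subtype.val f = e := by
  induction e using Sym2.ind with
  | _ a b =>
    simp only [SimpleGraph.mem_edgeSet] at he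
    refine ⟨G.connectedComponentMk a, s(⟨a, rfl⟩, ⟨b, ?_⟩), ?_, by simp⟩
    · exact (SimpleGraph.ConnectedComponent.mem_supp_iff _ _).2
        (SimpleGraph.ConnectedComponent.sound he.symm.reachable)
    · simpa [SimpleGraph.induce, SimpleGraph.mem_edgeSet] using he

lemma supp_unique {c c' : G.ConnectedComponent} {v : V} (h : v ∈ c.supp) (h' : v ∈ c'.supp) :
    c = c' := by
  rw [SimpleGraph.ConnectedComponent.mem_supp_iff] at h h'
  rw [← h, h']

/-- union of lifted matchings over components is a matching with the summed cardinality -/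
lemma lift_biUnion_matching (Q : ∀ c : G.ConnectedComponent, Finset (Sym2 c.supp))
    (hQ : ∀ c, IsMatchingFinset (G.induce c.supp) (Q c)) :
    IsMatchingFinset G (Finset.univ.biUnion fun c => liftE (Q c)) ∧
      (Finset.univ.biUnion fun c => liftE (Q c)).card = ∑ c, (Q c).card := by
  have hmem : ∀ (c : G.ConnectedComponent) (e : Sym2 V), e ∈ liftE (Q c) →
      e ∈ G.edgeSet ∧ ∀ v ∈ e, v ∈ c.supp := by
    intro c e he
    rcases Finset.mem_image.1 he with ⟨f, hf, rfl⟩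
    exact lift_edge_mem G ((hQ c).1 hf)
  constructor
  · constructor
    · intro e he
      rcases Finset.mem_biUnion.1 he with ⟨c, _, hc⟩
      exact (hmem c e hc).1
    · intro e he f hf hne v ⟨hve, hvf⟩
      rcases Finset.mem_biUnion.1 he with ⟨c, _, hc⟩
      rcases Finset.mem_biUnion.1 hf with ⟨c', _, hc'⟩
      have : c = c' := supp_unique G ((hmem c e hc).2 v hve) ((hmem c' f hc').2 v hvf)
      subst this
      rcases Finset.mem_image.1 hc with ⟨e', he', rfl⟩
      rcases Finset.mem_image.1 hc' with ⟨f', hf', rfl⟩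
      have hne' : e' ≠ f' := fun hh => hne (by rw [hh])
      have hv' : v ∈ c.supp := (hmem c _ hc).2 v hve
      refine (hQ c).2 e' he' f' hf' hne' ⟨v, hv'⟩ ⟨?_, ?_⟩
      · rcases Sym2.mem_map.1 hve with ⟨u, hu, huv⟩
        have : u = ⟨v, hv'⟩ := Subtype.ext huv
        exact this ▸ hu
      · rcases Sym2.mem_map.1 hvf with ⟨u, hu, huv⟩
        have : u = ⟨v, hv'⟩ := Subtype.ext huv
        exact this ▸ hu
  · rw [Finset.card_biUnion]
    · exact Finset.sum_congr rfl fun c _ => liftE_card (Q c)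
    · intro c _ c' _ hne
      rw [Function.onFun, Finset.disjoint_left]
      intro e he he'
      have hv : ∃ v, v ∈ e := by
        induction e using Sym2.ind with
        | _ a b => exact ⟨a, Sym2.mem_mk_left a b⟩
      rcases hv with ⟨v, hv⟩
      exact hne (supp_unique G ((hmem c e he).2 v hv) ((hmem c' e he').2 v hv))

lemma matchingNumber_sum :
    matchingNumber G = ∑ c : G.ConnectedComponent, matchingNumber (G.induce c.supp) := by
  apply le_antisymm
  · -- any matching of G decomposes
    obtain ⟨M, hM, hcard⟩ := exists_max_matching G
    rw [← hcard]
    set Mc : ∀ c : G.ConnectedComponent, Finset (Sym2 c.supp) := fun c =>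
      (G.induce c.supp).edgeFinset.filter (fun f => Sym2.map Subtype.val f ∈ M) with hMc
    have hMcm : ∀ c, IsMatchingFinset (G.induce c.supp) (Mc c) := by
      intro c
      constructor
      · intro e he
        simp only [hMc, Finset.coe_filter, Set.mem_setOf_eq, SimpleGraph.mem_edgeFinset] at he
        exact he.1
      · intro e he f hf hne v ⟨hve, hvf⟩
        simp only [hMc, Finset.mem_filter] at he hf
        have hne' : Sym2.map Subtype.val e ≠ Sym2.map Subtype.val f :=
          fun hh => hne (Sym2.map.injective Subtype.val_injective hh)
        refine hM.2 _ he.2 _ hf.2 hne' v.val ⟨?_, ?_⟩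
        · exact Sym2.mem_map.2 ⟨v, hve, rfl⟩
        · exact Sym2.mem_map.2 ⟨v, hvf, rfl⟩
    have hMeq : M = Finset.univ.biUnion fun c => liftE (Mc c) := by
      ext e
      constructor
      · intro he
        obtain ⟨c, f, hf, hfe⟩ := edge_decompose G (hM.1 he)
        refine Finset.mem_biUnion.2 ⟨c, Finset.mem_univ _, Finset.mem_image.2 ⟨f, ?_, hfe⟩⟩
        simp only [hMc, Finset.mem_filter, SimpleGraph.mem_edgeFinset]
        exact ⟨hf, hfe ▸ he⟩
      · intro he
        rcases Finset.mem_biUnion.1 he with ⟨c, _, hc⟩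
        rcases Finset.mem_image.1 hc with ⟨f, hf, rfl⟩
        simp only [hMc, Finset.mem_filter] at hf
        exact hf.2
    rw [hMeq, (lift_biUnion_matching G Mc hMcm).2]
    exact Finset.sum_le_sum fun c _ => card_le_matchingNumber _ (hMcm c)
  · -- combine maximum matchings
    have : ∀ c : G.ConnectedComponent, ∃ M : Finset (Sym2 c.supp),
        IsMatchingFinset (G.induce c.supp) M ∧ M.card = matchingNumber (G.induce c.supp) :=
      fun c => exists_max_matching _
    choose Mc hMc hMccard using this
    obtain ⟨hm, hcard⟩ := lift_biUnion_matching G Mc hMc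
    have := card_le_matchingNumber G hm
    rw [hcard] at this
    calc ∑ c : G.ConnectedComponent, matchingNumber (G.induce c.supp)
        = ∑ c, (Mc c).card := by exact (Finset.sum_congr rfl fun c _ => (hMccard c).symm)
      _ ≤ matchingNumber G := this
end comp

section part
variable {V : Type*} [Fintype V] (G : SimpleGraph V)

lemma partition_coloring {P : Finset (Finset (Sym2 V))}
    (hM : ∀ M ∈ P, IsMatchingFinset G M)
    (hcov : ∀ e, e ∈ G.edgeFinset ↔ ∃ M ∈ P, e ∈ M) :
    ∃ c : Sym2 V → ℕ, IsProperEdgeColoring G P.card c := by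
  refine ⟨fun e => if h : ∃ M ∈ P, e ∈ M then (P.equivFin ⟨h.choose, h.choose_spec.1⟩ : ℕ)
    else 0, ?_, ?_⟩
  · intro e he
    have h : ∃ M ∈ P, e ∈ M := (hcov e).1 (SimpleGraph.mem_edgeFinset.2 he)
    simp only [h, dif_pos]
    exact (P.equivFin ⟨h.choose, h.choose_spec.1⟩).2
  · intro e he f hf hne ⟨v, hve, hvf⟩
    have h1 : ∃ M ∈ P, e ∈ M := (hcov e).1 (SimpleGraph.mem_edgeFinset.2 he)
    have h2 : ∃ M ∈ P, f ∈ M := (hcov f).1 (SimpleGraph.mem_edgeFinset.2 hf)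
    simp only [h1, h2, dif_pos]
    intro hcc
    have : h1.choose = h2.choose := by
      have := P.equivFin.injective (Fin.val_injective hcc)
      exact congrArg Subtype.val this
    exact (hM h1.choose h1.choose_spec.1).2 e h1.choose_spec.2 f (this ▸ h2.choose_spec.2)
      hne v ⟨hve, hvf⟩

lemma edgeCard_partition {P : Finset (Finset (Sym2 V))} {k : ℕ}
    (hcard : ∀ M ∈ P, M.card = k)
    (hcov : ∀ e, e ∈ G.edgeFinset ↔ ∃ M ∈ P, e ∈ M)
    (hdisj : ∀ M ∈ P, ∀ N ∈ P, M ≠ N → Disjoint M N) :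
    G.edgeFinset.card = P.card * k := by
  have he : G.edgeFinset = P.biUnion (fun M => M) := by
    ext e; simp only [Finset.mem_biUnion]; exact hcov e
  rw [he, Finset.card_biUnion hdisj, Finset.sum_congr rfl hcard, Finset.sum_const, smul_eq_mul]

lemma matchingNumber_pos {e : Sym2 V} (he : e ∈ G.edgeFinset) : 1 ≤ matchingNumber G := by
  have : IsMatchingFinset G {e} := by
    constructor
    · intro f hf
      simp only [Finset.coe_singleton, Set.mem_singleton_iff] at hf
      exact hf ▸ SimpleGraph.mem_edgeFinset.1 he
    · intro a ha b hb hne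
      simp only [Finset.mem_singleton] at ha hb
      exact absurd (ha.trans hb.symm) hne
  simpa using card_le_matchingNumber G this

lemma matchingNumber_eq_zero (h : ¬ G.edgeFinset.Nonempty) : matchingNumber G = 0 := by
  apply le_antisymm _ (Nat.zero_le _)
  apply csSup_le (matchingSet_nonempty G)
  rintro n ⟨M, hM, rfl⟩
  have : M = ∅ := by
    rw [Finset.eq_empty_iff_forall_notMem]
    intro e he
    exact h ⟨e, SimpleGraph.mem_edgeFinset.2 (hM.1 he)⟩
  simp [this]

lemma friendly_part_card {P : Finset (Finset (Sym2 V))}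
    (hne : G.edgeFinset.Nonempty)
    (hM : ∀ M ∈ P, IsMatchingFinset G M ∧ M.card = matchingNumber G)
    (hcov : ∀ e, e ∈ G.edgeFinset ↔ ∃ M ∈ P, e ∈ M)
    (hdisj : ∀ M ∈ P, ∀ N ∈ P, M ≠ N → Disjoint M N) :
    P.card = chromaticIndex G := by
  have hnu : 1 ≤ matchingNumber G := matchingNumber_pos G hne.choose_spec
  have hcount : G.edgeFinset.card = P.card * matchingNumber G :=
    edgeCard_partition G (fun M hMp => (hM M hMp).2) hcov hdisj
  apply le_antisymm
  · obtain ⟨c, hc⟩ := chromaticIndex_spec G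
    have := edgeCard_le_of_coloring G hc
    rw [hcount] at this
    exact Nat.le_of_mul_le_mul_right this hnu
  · obtain ⟨c, hc⟩ := partition_coloring G (fun M hMp => (hM M hMp).1) hcov
    exact chromaticIndex_le G hc
end part

lemma liftE_mem {V : Type*} [Fintype V] (G : SimpleGraph V) {c : G.ConnectedComponent}
    {Mq : Finset (Sym2 c.supp)}
    (hq : IsMatchingFinset (G.induce c.supp) Mq) {e : Sym2 V} (he : e ∈ liftE Mq) :
    e ∈ G.edgeSet ∧ ∀ v ∈ e, v ∈ c.supp := by
  rcases Finset.mem_image.1 he with ⟨f, hf, rfl⟩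
  exact lift_edge_mem G (hq.1 hf)

theorem stmt_15 {V : Type*} [Fintype V] (G : SimpleGraph V)
    (h : ∀ c : G.ConnectedComponent, (G.induce c.supp).edgeFinset.Nonempty →
      Friendly (G.induce c.supp) ∧ chromaticIndex (G.induce c.supp) = chromaticIndex G) :
    Friendly G := by
  set p := chromaticIndex G with hp
  have key : ∀ c : G.ConnectedComponent, ∃ Q : Fin p → Finset (Sym2 c.supp),
      (∀ j, IsMatchingFinset (G.induce c.supp) (Q j) ∧
        (Q j).card = matchingNumber (G.induce c.supp)) ∧
      (∀ e, e ∈ (G.induce c.supp).edgeFinset ↔ ∃ j, e ∈ Q j) ∧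
      (∀ j k : Fin p, j ≠ k → Disjoint (Q j) (Q k)) := by
    intro c
    by_cases hc : (G.induce c.supp).edgeFinset.Nonempty
    · obtain ⟨⟨P, hP1, hP2, hP3⟩, hchi⟩ := h c hc
      have hcard : P.card = p := by
        rw [friendly_part_card _ hc hP1 hP2 hP3, hchi]
      let E := Finset.equivFinOfCardEq hcard
      refine ⟨fun j => (E.symm j).val, fun j => hP1 _ (E.symm j).2, ?_, ?_⟩
      · intro e
        refine (SimpleGraph.mem_edgeFinset.trans (SimpleGraph.mem_edgeFinset.symm.trans (hP2 e))).trans ?_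
        constructor
        · rintro ⟨M, hMp, heM⟩
          refine ⟨E ⟨M, hMp⟩, ?_⟩
          show e ∈ (E.symm (E ⟨M, hMp⟩)).val
          rw [Equiv.symm_apply_apply]
          exact heM
        · rintro ⟨j, hj⟩
          exact ⟨_, (E.symm j).2, hj⟩
      · intro j k hjk
        exact hP3 _ (E.symm j).2 _ (E.symm k).2
          (fun hh => hjk (E.symm.injective (Subtype.ext hh)))
    · refine ⟨fun _ => ∅, ?_, ?_, ?_⟩
      · intro j
        refine ⟨⟨by simp, by simp⟩, ?_⟩
        rw [matchingNumber_eq_zero _ hc, Finset.card_empty]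
      · intro e
        simp only [Finset.notMem_empty, exists_false, iff_false]
        exact fun he => hc ⟨e, he⟩
      · intro j k _
        simp
  choose Q hQ1 hQ2 hQ3 using key
  set N : Fin p → Finset (Sym2 V) := fun j =>
    Finset.univ.biUnion fun c => liftE (Q c j) with hN
  have hNm : ∀ j, IsMatchingFinset G (N j) ∧ (N j).card = matchingNumber G := by
    intro j
    obtain ⟨hm, hcard⟩ := lift_biUnion_matching G (fun c => Q c j) (fun c => (hQ1 c j).1)
    refine ⟨hm, ?_⟩
    rw [hN]
    rw [hcard, matchingNumber_sum G]
    exact Finset.sum_congr rfl fun c _ => (hQ1 c j).2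
  refine ⟨Finset.univ.image N, ?_, ?_, ?_⟩
  · intro M hM
    rcases Finset.mem_image.1 hM with ⟨j, _, rfl⟩
    exact hNm j
  · intro e
    constructor
    · intro he
      obtain ⟨c, f, hf, hfe⟩ := edge_decompose G (SimpleGraph.mem_edgeFinset.1 he)
      obtain ⟨j, hj⟩ := (hQ2 c f).1 (SimpleGraph.mem_edgeFinset.2 hf)
      refine ⟨N j, Finset.mem_image.2 ⟨j, Finset.mem_univ _, rfl⟩, ?_⟩
      exact Finset.mem_biUnion.2 ⟨c, Finset.mem_univ _, Finset.mem_image.2 ⟨f, hj, hfe⟩⟩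
    · rintro ⟨M, hM, heM⟩
      rcases Finset.mem_image.1 hM with ⟨j, _, rfl⟩
      exact SimpleGraph.mem_edgeFinset.2 ((hNm j).1.1 heM)
  · intro M hM M' hM' hne
    rcases Finset.mem_image.1 hM with ⟨j, _, rfl⟩
    rcases Finset.mem_image.1 hM' with ⟨k, _, rfl⟩
    have hjk : j ≠ k := fun hh => hne (by rw [hh])
    rw [Finset.disjoint_left]
    intro e hej hek
    rcases Finset.mem_biUnion.1 hej with ⟨c, _, hc⟩
    rcases Finset.mem_biUnion.1 hek with ⟨c', _, hc'⟩
    have hv : ∃ v, v ∈ e := by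
      induction e using Sym2.ind with
      | _ a b => exact ⟨a, Sym2.mem_mk_left a b⟩
    rcases hv with ⟨v, hv⟩
    have h1 := liftE_mem G (hQ1 c j).1 hc
    have h2 := liftE_mem G (hQ1 c' k).1 hc'
    have hcc : c = c' := supp_unique G (h1.2 v hv) (h2.2 v hv)
    subst hcc
    rcases Finset.mem_image.1 hc with ⟨f, hf, hfe⟩
    rcases Finset.mem_image.1 hc' with ⟨f', hf', hfe'⟩
    have hff : f = f' := Sym2.map.injective Subtype.val_injective (hfe.trans hfe'.symm)
    subst hff
    exact (Finset.disjoint_left.1 (hQ3 c j k hjk) hf) hf'
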